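/- Let 0 < α < 1, T > 0, and let f ∈ C¹([0,T]) be monotone (either nondecreasing or nonincreasing on [0,T]). Then for every t ∈ (0,T], 2 f(t) ∂^α_{+0,t} f(t) ≥ ∂^α_{+0,t}(f²)(t), where f² denotes the function s ↦ f(s)². -/

import Mathlib

open Set MeasureTheory Filter

/-- Caputo fractional derivative of order `α` at base point `0`. -/
noncomputable def caputo (α : ℝ) (f : ℝ → ℝ) (t : ℝ) : ℝ :=
  (1 / Real.Gamma (1 - α)) * ∫ s in (0:ℝ)..t, (t - s) ^ (-α) * deriv f s

lemma deriv_nonneg_of_monotoneOn {f : ℝ → ℝ} {T s : ℝ}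
    (hd : DifferentiableAt ℝ f s) (hm : MonotoneOn f (Set.Icc 0 T))
    (hs : s ∈ Set.Ico (0:ℝ) T) : 0 ≤ deriv f s := by
  have hslope : Tendsto (slope f s) (nhdsWithin s {s}ᶜ) (nhds (deriv f s)) :=
    (hasDerivAt_iff_tendsto_slope.mp hd.hasDerivAt)
  have hsub : nhdsWithin s (Set.Ioi s) ≤ nhdsWithin s {s}ᶜ :=
    nhdsWithin_mono s (fun x hx => ne_of_gt hx)
  have h2 : Tendsto (slope f s) (nhdsWithin s (Set.Ioi s)) (nhds (deriv f s)) :=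
    hslope.mono_left hsub
  refine ge_of_tendsto h2 ?_
  have hIio : Set.Iio T ∈ nhds s := Iio_mem_nhds hs.2
  filter_upwards [eventually_nhdsWithin_of_eventually_nhds hIio,
    self_mem_nhdsWithin] with x hxT hxs
  have hx1 : x ∈ Set.Icc (0:ℝ) T := ⟨le_of_lt (lt_of_le_of_lt hs.1 hxs), le_of_lt hxT⟩
  have hs1 : s ∈ Set.Icc (0:ℝ) T := ⟨hs.1, le_of_lt hs.2⟩
  have : f s ≤ f x := hm hs1 hx1 (le_of_lt hxs)
  have hx : (0:ℝ) < x - s := sub_pos.mpr hxs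
  simp only [slope_def_field]
  rw [div_eq_mul_inv]
  exact mul_nonneg (by linarith) (le_of_lt (inv_pos.mpr hx))

lemma deriv_nonpos_of_antitoneOn {f : ℝ → ℝ} {T s : ℝ}
    (hd : DifferentiableAt ℝ f s) (hm : AntitoneOn f (Set.Icc 0 T))
    (hs : s ∈ Set.Ico (0:ℝ) T) : deriv f s ≤ 0 := by
  have h := deriv_nonneg_of_monotoneOn (f := fun x => -f x) (hd.neg)
    (fun a ha b hb hab => neg_le_neg (hm ha hb hab)) hs
  rw [deriv.fun_neg] at h
  linarith

/-- For monotone C1 functions f on [0,T]: 2 f(t) ∂^α f(t) ≥ ∂^α (f²)(t) on (0,T]. -/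
theorem caputo_sq_inequality (α T : ℝ) (hα : 0 < α ∧ α < 1) (hT : 0 < T) (f : ℝ → ℝ)
    (hd : ∀ t ∈ Set.Icc (0:ℝ) T, DifferentiableAt ℝ f t)
    (hd' : ContinuousOn (deriv f) (Set.Icc 0 T))
    (hmono : MonotoneOn f (Set.Icc 0 T) ∨ AntitoneOn f (Set.Icc 0 T)) :
    ∀ t ∈ Set.Ioc (0:ℝ) T, caputo α (fun s => (f s) ^ 2) t ≤ 2 * f t * caputo α f t := by
  obtain ⟨hα0, hα1⟩ := hα
  intro t ht
  obtain ⟨ht0, htT⟩ := ht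
  have hsub : Set.Icc (0:ℝ) t ⊆ Set.Icc 0 T := Icc_subset_Icc le_rfl htT
  have huIcc : Set.uIcc (0:ℝ) t = Set.Icc 0 t := uIcc_of_le (le_of_lt ht0)
  have hC : 0 ≤ 1 / Real.Gamma (1 - α) :=
    le_of_lt (div_pos one_pos (Real.Gamma_pos_of_pos (by linarith)))
  -- continuity of f on [0,T]
  have hfc : ContinuousOn f (Set.Icc 0 T) := fun x hx => (hd x hx).continuousAt.continuousWithinAt
  -- kernel integrability
  have hker : IntervalIntegrable (fun s => (t - s) ^ (-α)) volume 0 t := by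
    have h1 : IntervalIntegrable (fun x : ℝ => x ^ (-α)) volume 0 t :=
      intervalIntegral.intervalIntegrable_rpow' (by linarith)
    have := (h1.comp_sub_left t).symm
    simpa using this
  have hderc : ContinuousOn (deriv f) (Set.uIcc 0 t) := by
    rw [huIcc]; exact hd'.mono hsub
  have hfct : ContinuousOn f (Set.uIcc 0 t) := by
    rw [huIcc]; exact hfc.mono hsub
  have hInt2 : IntervalIntegrable (fun s => (t - s) ^ (-α) * (2 * f t * deriv f s)) volume 0 t := by
    have : IntervalIntegrable (fun s => (t - s) ^ (-α) * deriv f s) volume 0 t :=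
      hker.mul_continuousOn hderc
    have h2 := this.const_mul (2 * f t)
    refine h2.congr ?_
    refine fun x _ => ?_
    beta_reduce
    ring
  have hInt1 : IntervalIntegrable (fun s => (t - s) ^ (-α) * (2 * f s * deriv f s)) volume 0 t := by
    have : IntervalIntegrable (fun s => (t - s) ^ (-α) * deriv f s) volume 0 t :=
      hker.mul_continuousOn hderc
    have h2 := this.mul_continuousOn (g := fun x => 2 * f x) ((continuousOn_const (c := (2:ℝ))).mul hfct)
    refine h2.congr (fun x _ => ?_)
    beta_reduce
    ring
  -- rewrite caputo of f²
  have hderiv_sq : ∀ s ∈ Set.Icc (0:ℝ) t,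
      deriv (fun x => (f x) ^ 2) s = 2 * f s * deriv f s := by
    intro s hs
    have h := ((hd s (hsub hs)).hasDerivAt.pow 2)
    change deriv (f ^ 2) s = _
    simpa [mul_comm, mul_assoc, mul_left_comm] using h.deriv
  have hrw : caputo α (fun s => (f s) ^ 2) t
      = (1 / Real.Gamma (1 - α)) * ∫ s in (0:ℝ)..t, (t - s) ^ (-α) * (2 * f s * deriv f s) := by
    unfold caputo
    congr 1
    apply intervalIntegral.integral_congr
    intro s hs
    rw [huIcc] at hs
    simp only []
    rw [hderiv_sq s hs]
  -- pointwise inequality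
  have hpt : ∀ s ∈ Set.Icc (0:ℝ) t,
      (t - s) ^ (-α) * (2 * f s * deriv f s) ≤ (t - s) ^ (-α) * (2 * f t * deriv f s) := by
    intro s hs
    rcases eq_or_lt_of_le hs.2 with heq | hlt
    · subst heq; simp
    · have hsT : s ∈ Set.Ico (0:ℝ) T := ⟨hs.1, lt_of_lt_of_le hlt htT⟩
      have hkey : 0 ≤ (f t - f s) * deriv f s := by
        rcases hmono with hm | hm
        · exact mul_nonneg (sub_nonneg.mpr (hm (hsub hs) ⟨le_of_lt ht0, htT⟩ hs.2))
            (deriv_nonneg_of_monotoneOn (hd s (hsub hs)) hm hsT)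
        · have h1 : f t - f s ≤ 0 := sub_nonpos.mpr (hm (hsub hs) ⟨le_of_lt ht0, htT⟩ hs.2)
          have h2 : deriv f s ≤ 0 := deriv_nonpos_of_antitoneOn (hd s (hsub hs)) hm hsT
          nlinarith
      have hk : 0 ≤ (t - s) ^ (-α) := Real.rpow_nonneg (by linarith [hs.2]) _
      have : 2 * f s * deriv f s ≤ 2 * f t * deriv f s := by nlinarith
      exact mul_le_mul_of_nonneg_left this hk
  have hineq := intervalIntegral.integral_mono_on (le_of_lt ht0) hInt1 hInt2 hpt
  have hrw2 : 2 * f t * caputo α f t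
      = (1 / Real.Gamma (1 - α)) * ∫ s in (0:ℝ)..t, (t - s) ^ (-α) * (2 * f t * deriv f s) := by
    unfold caputo
    have : (∫ s in (0:ℝ)..t, (t - s) ^ (-α) * (2 * f t * deriv f s))
        = (2 * f t) * ∫ s in (0:ℝ)..t, (t - s) ^ (-α) * deriv f s := by
      rw [← intervalIntegral.integral_const_mul]
      apply intervalIntegral.integral_congr
      intro s _; ring
    rw [this]; ring
  rw [hrw, hrw2]
  exact mul_le_mul_of_nonneg_left hineq hC
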